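/- arXiv:2604.25917 — 3 statements merged into one kernel-verified Lean document; each statement's English description precedes it below -/
import Mathlib

section
/- For every probability vector p : Fin n → ℝ, the spectral norm of S(p) = diagonal(p) − p pᵀ satisfies ‖S(p)‖₂ ≤ 1 − ∑ i, (p i)^2. -/
/-- The spectral norm of a real matrix: the operator norm of the induced
linear map between Euclidean spaces. -/
noncomputable def matrixSpectralNorm {m n : ℕ} (A : Matrix (Fin m) (Fin n) ℝ) : ℝ :=
  ‖LinearMap.toContinuousLinearMap (Matrix.toEuclideanLin A)‖

open scoped Matrix

private lemma quad_bound {n : ℕ} (p : Fin n → ℝ) (hp : ∀ i, 0 ≤ p i) (hsum : ∑ i, p i = 1)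
    (x : Fin n → ℝ) :
    ∑ i, p i * (x i - ∑ j, p j * x j) ^ 2 ≤ (1 - ∑ i, (p i) ^ 2) * ∑ i, (x i) ^ 2 := by
  set t : ℝ := 1 - ∑ i, (p i) ^ 2 with ht_def
  set c : ℝ := ∑ j, p j * x j with hc
  set S2 : ℝ := ∑ i, p i * (x i) ^ 2 with hS2
  have hpair : ∀ j k : Fin n, j ≠ k → p j + p k ≤ 1 := by
    intro j k hjk
    calc p j + p k = ∑ i ∈ ({j, k} : Finset (Fin n)), p i := (Finset.sum_pair hjk).symm
      _ ≤ ∑ i, p i := Finset.sum_le_sum_of_subset_of_nonneg (Finset.subset_univ _)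
          (fun i _ _ => hp i)
      _ = 1 := hsum
  have ht_eq : t = ∑ j, p j * (1 - p j) := by
    have h : ∑ j, p j * (1 - p j) = (∑ j, p j) - ∑ j, (p j) ^ 2 := by
      rw [← Finset.sum_sub_distrib]
      exact Finset.sum_congr rfl fun j _ => by ring
    rw [h, hsum]
  have claimA : ∀ k, 2 * (p k * (1 - p k)) ≤ t := by
    intro k
    rw [ht_eq, ← Finset.add_sum_erase _ _ (Finset.mem_univ k)]
    have h2 : p k * (1 - p k) ≤ ∑ j ∈ Finset.univ.erase k, p j * (1 - p j) := by
      calc p k * (1 - p k) = (∑ j ∈ Finset.univ.erase k, p j) * p k := by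
            rw [Finset.sum_erase_eq_sub (Finset.mem_univ k), hsum]; ring
        _ = ∑ j ∈ Finset.univ.erase k, p j * p k := by rw [Finset.sum_mul]
        _ ≤ ∑ j ∈ Finset.univ.erase k, p j * (1 - p j) := by
            apply Finset.sum_le_sum
            intro j hj
            have hjk : j ≠ k := Finset.ne_of_mem_erase hj
            have := hpair j k hjk
            nlinarith [hp j, hp k]
    linarith
  have hQ_eq : ∑ i, p i * (x i - c) ^ 2 = S2 - c ^ 2 := by
    have h : ∑ i, p i * (x i - c) ^ 2
        = ∑ i, (p i * (x i) ^ 2 - (2 * c) * (p i * x i) + c ^ 2 * p i) :=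
      Finset.sum_congr rfl fun i _ => by ring
    rw [h, Finset.sum_add_distrib, Finset.sum_sub_distrib, ← Finset.mul_sum, ← Finset.mul_sum,
      hsum, ← hc, ← hS2]
    ring
  have hdouble : ∑ i, ∑ j, p i * p j * (x i - x j) ^ 2 = 2 * (S2 - c ^ 2) := by
    have hrow : ∀ i, ∑ j, p i * p j * (x i - x j) ^ 2
        = p i * (x i) ^ 2 + S2 * p i - (2 * c) * (p i * x i) := by
      intro i
      have h : ∀ j, p i * p j * (x i - x j) ^ 2
          = (p i * (x i) ^ 2) * p j + p i * (p j * (x j) ^ 2) - (2 * (p i * x i)) * (p j * x j) :=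
        fun j => by ring
      rw [Finset.sum_congr rfl fun j _ => h j, Finset.sum_sub_distrib, Finset.sum_add_distrib,
        ← Finset.mul_sum, ← Finset.mul_sum, ← Finset.mul_sum, hsum, ← hc, ← hS2]
      ring
    rw [Finset.sum_congr rfl fun i _ => hrow i, Finset.sum_sub_distrib, Finset.sum_add_distrib,
      ← Finset.mul_sum, ← Finset.mul_sum, hsum, ← hc, ← hS2]
    ring
  have hsplit : ∀ (g : Fin n → ℝ) (i : Fin n),
      ∑ j, (if i = j then 0 else g j) = (∑ j, g j) - g i := by
    intro g i
    have h : ∀ j, (if i = j then (0:ℝ) else g j) = g j - (if i = j then g j else 0) := by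
      intro j; by_cases h : i = j <;> simp [h]
    rw [Finset.sum_congr rfl fun j _ => h j, Finset.sum_sub_distrib, Finset.sum_ite_eq]
    simp
  have hbound : ∑ i, ∑ j, p i * p j * (x i - x j) ^ 2
      ≤ ∑ i, ∑ j, (if i = j then 0 else 2 * (p i * p j) * ((x i) ^ 2 + (x j) ^ 2)) := by
    apply Finset.sum_le_sum; intro i _
    apply Finset.sum_le_sum; intro j _
    by_cases h : i = j
    · simp [h]
    · rw [if_neg h]
      nlinarith [mul_nonneg (hp i) (hp j), sq_nonneg (x i + x j)]
  have hrhs : ∑ i, ∑ j, (if i = j then 0 else 2 * (p i * p j) * ((x i) ^ 2 + (x j) ^ 2))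
      = ∑ i, (2 * (p i * (x i) ^ 2) + 2 * (p i * S2) - 4 * ((p i) ^ 2 * (x i) ^ 2)) := by
    apply Finset.sum_congr rfl
    intro i _
    rw [hsplit]
    have h : ∀ j, 2 * (p i * p j) * ((x i) ^ 2 + (x j) ^ 2)
        = (2 * (p i * (x i) ^ 2)) * p j + (2 * p i) * (p j * (x j) ^ 2) := fun j => by ring
    rw [Finset.sum_congr rfl fun j _ => h j, Finset.sum_add_distrib, ← Finset.mul_sum,
      ← Finset.mul_sum, hsum, ← hS2]
    ring
  have hfinal : ∑ i, (2 * (p i * (x i) ^ 2) + 2 * (p i * S2) - 4 * ((p i) ^ 2 * (x i) ^ 2))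
      ≤ ∑ i, (2 * (p i * S2) - 2 * (p i * (x i) ^ 2) + 2 * (t * (x i) ^ 2)) := by
    apply Finset.sum_le_sum
    intro i _
    have h := claimA i
    nlinarith [sq_nonneg (x i)]
  have hfinal2 : ∑ i, (2 * (p i * S2) - 2 * (p i * (x i) ^ 2) + 2 * (t * (x i) ^ 2))
      = 2 * (t * ∑ i, (x i) ^ 2) := by
    have h : ∀ i : Fin n, 2 * (p i * S2) - 2 * (p i * (x i) ^ 2) + 2 * (t * (x i) ^ 2)
        = (2 * S2) * p i - 2 * (p i * (x i) ^ 2) + (2 * t) * (x i) ^ 2 := fun i => by ring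
    rw [Finset.sum_congr rfl fun i _ => h i, Finset.sum_add_distrib, Finset.sum_sub_distrib,
      ← Finset.mul_sum, ← Finset.mul_sum, ← Finset.mul_sum, hsum, ← hS2]
    ring
  rw [hQ_eq]
  have := hbound
  rw [hdouble, hrhs] at this
  linarith [hfinal, hfinal2.le, hfinal2.ge]

theorem spectralNorm_covMatrix_le {n : ℕ} (p : Fin n → ℝ)
    (hp : ∀ i, 0 ≤ p i) (hsum : ∑ i, p i = 1) :
    matrixSpectralNorm (Matrix.diagonal p - Matrix.vecMulVec p p) ≤
      1 - ∑ i, (p i) ^ 2 := by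
  set t : ℝ := 1 - ∑ i, (p i) ^ 2 with ht_def
  have hp1 : ∀ i, p i ≤ 1 := fun i =>
    hsum ▸ Finset.single_le_sum (fun j _ => hp j) (Finset.mem_univ i)
  have ht0 : 0 ≤ t := by
    have h : ∑ i, (p i) ^ 2 ≤ ∑ i, p i :=
      Finset.sum_le_sum fun i _ => by nlinarith [hp i, hp1 i]
    rw [hsum] at h
    simp only [ht_def]
    linarith
  have hvec : ∀ x : Fin n → ℝ,
      ∑ i, (((Matrix.diagonal p - Matrix.vecMulVec p p) *ᵥ x) i) ^ 2
        ≤ t ^ 2 * ∑ i, (x i) ^ 2 := by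
    intro x
    set c : ℝ := ∑ j, p j * x j with hc
    set y : Fin n → ℝ := fun i => p i * (x i - c) with hy
    have hentry : ∀ i, ((Matrix.diagonal p - Matrix.vecMulVec p p) *ᵥ x) i = y i := by
      intro i
      have h1 : ∀ j, ((Matrix.diagonal p - Matrix.vecMulVec p p) i j) * x j
          = (if i = j then p i * x j else 0) - p i * (p j * x j) := by
        intro j
        by_cases h : i = j <;>
          simp [Matrix.diagonal_apply, Matrix.vecMulVec_apply, h, sub_mul, mul_assoc]
      rw [Matrix.mulVec, dotProduct, Finset.sum_congr rfl fun j _ => h1 j,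
        Finset.sum_sub_distrib, Finset.sum_ite_eq, ← Finset.mul_sum, ← hc]
      simp [hy]
      ring
    set cy : ℝ := ∑ j, p j * y j with hcy
    have hzero : ∑ i, p i * (x i - c) = 0 := by
      have h : ∀ i : Fin n, p i * (x i - c) = p i * x i - c * p i := fun i => by ring
      rw [Finset.sum_congr rfl fun i _ => h i, Finset.sum_sub_distrib, ← Finset.mul_sum, hsum,
        ← hc]
      ring
    have hN_eq : ∑ i, (y i) ^ 2 = ∑ i, (p i * (x i - c)) * (y i - cy) := by
      have h : ∀ i : Fin n, (p i * (x i - c)) * (y i - cy)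
          = (y i) ^ 2 - cy * (p i * (x i - c)) := by
        intro i; simp only [hy]; ring
      rw [Finset.sum_congr rfl fun i _ => h i, Finset.sum_sub_distrib, ← Finset.mul_sum, hzero]
      ring
    have hCS : (∑ i, (p i * (x i - c)) * (y i - cy)) ^ 2
        ≤ (∑ i, p i * (x i - c) ^ 2) * (∑ i, p i * (y i - cy) ^ 2) :=
      Finset.sum_sq_le_sum_mul_sum_of_sq_eq_mul _
        (fun i _ => mul_nonneg (hp i) (sq_nonneg _))
        (fun i _ => mul_nonneg (hp i) (sq_nonneg _)) (fun i _ => by ring)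
    have hQx := quad_bound p hp hsum x
    have hQy := quad_bound p hp hsum y
    rw [← hc, ← ht_def] at hQx
    rw [← hcy, ← ht_def] at hQy
    have hN : (∑ i, (y i) ^ 2) ^ 2 ≤ t ^ 2 * (∑ i, (x i) ^ 2) * (∑ i, (y i) ^ 2) := by
      calc (∑ i, (y i) ^ 2) ^ 2
          = (∑ i, (p i * (x i - c)) * (y i - cy)) ^ 2 := by rw [hN_eq]
        _ ≤ (∑ i, p i * (x i - c) ^ 2) * (∑ i, p i * (y i - cy) ^ 2) := hCS
        _ ≤ (t * ∑ i, (x i) ^ 2) * (t * ∑ i, (y i) ^ 2) :=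
            mul_le_mul hQx hQy
              (Finset.sum_nonneg fun i _ => mul_nonneg (hp i) (sq_nonneg _))
              (mul_nonneg ht0 (Finset.sum_nonneg fun i _ => sq_nonneg _))
        _ = t ^ 2 * (∑ i, (x i) ^ 2) * (∑ i, (y i) ^ 2) := by ring
    have hfin : ∑ i, (y i) ^ 2 ≤ t ^ 2 * ∑ i, (x i) ^ 2 := by
      rcases eq_or_lt_of_le (Finset.sum_nonneg (fun i _ => sq_nonneg (y i))
        (s := Finset.univ)) with h | h
      · rw [← h]
        positivity
      · nlinarith [hN, h]
    calc ∑ i, (((Matrix.diagonal p - Matrix.vecMulVec p p) *ᵥ x) i) ^ 2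
        = ∑ i, (y i) ^ 2 := Finset.sum_congr rfl fun i _ => by rw [hentry i]
      _ ≤ t ^ 2 * ∑ i, (x i) ^ 2 := hfin
  unfold matrixSpectralNorm
  apply ContinuousLinearMap.opNorm_le_bound _ ht0
  intro x
  have h := hvec ((WithLp.equiv 2 (Fin n → ℝ)) x)
  rw [EuclideanSpace.norm_eq, EuclideanSpace.norm_eq]
  calc Real.sqrt (∑ i, ‖(LinearMap.toContinuousLinearMap
        (Matrix.toEuclideanLin (Matrix.diagonal p - Matrix.vecMulVec p p))) x i‖ ^ 2)
      = Real.sqrt (∑ i, (((Matrix.diagonal p - Matrix.vecMulVec p p) *ᵥ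
          ((WithLp.equiv 2 (Fin n → ℝ)) x)) i) ^ 2) := by
        simp only [LinearMap.coe_toContinuousLinearMap', Matrix.toEuclideanLin_apply,
          WithLp.equiv_apply, Real.norm_eq_abs, sq_abs]
    _ ≤ Real.sqrt (t ^ 2 * ∑ i, (((WithLp.equiv 2 (Fin n → ℝ)) x) i) ^ 2) :=
        Real.sqrt_le_sqrt h
    _ = t * Real.sqrt (∑ i, ‖x i‖ ^ 2) := by
        rw [Real.sqrt_mul (sq_nonneg t), Real.sqrt_sq ht0,
          show (∑ i, (((WithLp.equiv 2 (Fin n → ℝ)) x) i) ^ 2) = ∑ i, ‖x i‖ ^ 2 from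
            Finset.sum_congr rfl fun i _ => by
              simp [WithLp.equiv_apply, Real.norm_eq_abs, sq_abs]]
end

section
/- Let p : Fin n → ℝ be a probability vector and ε ≥ 0. If the Shannon entropy satisfies H(p) ≤ ε, then the spectral norm of S(p) = diagonal(p) − p pᵀ satisfies ‖S(p)‖₂ ≤ ε. -/
theorem spectralNorm_covMatrix_le_of_entropy_le {n : ℕ} (p : Fin n → ℝ)
    (hp : ∀ i, 0 ≤ p i) (hsum : ∑ i, p i = 1) (ε : ℝ) (hε : 0 ≤ ε)
    (hH : ∑ i, Real.negMulLog (p i) ≤ ε) :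
    matrixSpectralNorm (Matrix.diagonal p - Matrix.vecMulVec p p) ≤ ε := by
  set S := Matrix.diagonal p - Matrix.vecMulVec p p with hS
  set t : ℝ := ∑ i, p i * (1 - p i) with ht
  have hp1 : ∀ i, p i ≤ 1 := by
    intro i
    calc p i ≤ ∑ j, p j := Finset.single_le_sum (fun j _ => hp j) (Finset.mem_univ i)
    _ = 1 := hsum
  have ht0 : 0 ≤ t :=
    Finset.sum_nonneg fun i _ => mul_nonneg (hp i) (by linarith [hp1 i])
  have htH : t ≤ ∑ i, Real.negMulLog (p i) := by
    apply Finset.sum_le_sum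
    intro i _
    rcases eq_or_lt_of_le (hp i) with h | h
    · simp [← h, Real.negMulLog]
    · have hl := Real.log_le_sub_one_of_pos h
      unfold Real.negMulLog
      nlinarith [hp i]
  -- Frobenius bound
  have hpair : ∀ i j : Fin n, i ≠ j → p i + p j ≤ 1 := by
    intro i j hij
    have : ∑ k ∈ ({i, j} : Finset (Fin n)), p k ≤ ∑ k, p k :=
      Finset.sum_le_sum_of_subset_of_nonneg (Finset.subset_univ _) (fun k _ _ => hp k)
    rwa [Finset.sum_pair hij, hsum] at this
  have hF : ∑ i, ∑ j, (S i j) ^ 2 ≤ t ^ 2 := by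
    have ht2 : t ^ 2 = ∑ i, ∑ j, (p i * (1 - p i)) * (p j * (1 - p j)) := by
      rw [ht, sq, Finset.sum_mul_sum]
    rw [ht2]
    apply Finset.sum_le_sum
    intro i _
    apply Finset.sum_le_sum
    intro j _
    have hSij : S i j = (if i = j then p i else 0) - p i * p j := by
      simp [hS, Matrix.diagonal, Matrix.vecMulVec]
    by_cases h : i = j
    · subst h
      have hd : S i i = p i * (1 - p i) := by rw [hSij]; simp; ring
      rw [hd, sq]
    · simp only [hSij, if_neg h]
      have h1 : p j ≤ 1 - p i := by linarith [hpair i j h]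
      have h2 : p i ≤ 1 - p j := by linarith [hpair i j h]
      nlinarith [hp i, hp j, mul_nonneg (hp i) (hp j)]
  -- operator norm bound
  have hop : matrixSpectralNorm S ≤ t := by
    apply ContinuousLinearMap.opNorm_le_bound _ ht0
    intro x
    have happ : ∀ i, (LinearMap.toContinuousLinearMap (Matrix.toEuclideanLin S) x) i
        = ∑ j, S i j * x j := fun i => rfl
    have hnx : ‖x‖ = Real.sqrt (∑ j, (x j) ^ 2) := by
      rw [EuclideanSpace.norm_eq]
      congr 1
      exact Finset.sum_congr rfl fun j _ => by rw [Real.norm_eq_abs, sq_abs]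
    have hx0 : (0:ℝ) ≤ ∑ j, (x j) ^ 2 := Finset.sum_nonneg fun j _ => sq_nonneg _
    have key : ∑ i, (∑ j, S i j * x j) ^ 2 ≤ t ^ 2 * ∑ j, (x j) ^ 2 := by
      calc ∑ i, (∑ j, S i j * x j) ^ 2
          ≤ ∑ i, (∑ j, (S i j) ^ 2) * ∑ j, (x j) ^ 2 :=
            Finset.sum_le_sum fun i _ => Finset.sum_mul_sq_le_sq_mul_sq _ _ _
        _ = (∑ i, ∑ j, (S i j) ^ 2) * ∑ j, (x j) ^ 2 := by
            rw [← Finset.sum_mul]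
        _ ≤ t ^ 2 * ∑ j, (x j) ^ 2 := by
            apply mul_le_mul_of_nonneg_right hF hx0
    have hnorm : ‖LinearMap.toContinuousLinearMap (Matrix.toEuclideanLin S) x‖
        = Real.sqrt (∑ i, (∑ j, S i j * x j) ^ 2) := by
      rw [EuclideanSpace.norm_eq]
      congr 1
      exact Finset.sum_congr rfl fun i _ => by rw [happ i, Real.norm_eq_abs, sq_abs]
    rw [hnorm, hnx]
    calc Real.sqrt (∑ i, (∑ j, S i j * x j) ^ 2)
        ≤ Real.sqrt (t ^ 2 * ∑ j, (x j) ^ 2) := Real.sqrt_le_sqrt key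
      _ = t * Real.sqrt (∑ j, (x j) ^ 2) := by
          rw [Real.sqrt_mul (sq_nonneg t), Real.sqrt_sq ht0]
  calc matrixSpectralNorm S ≤ t := hop
    _ ≤ ε := le_trans htH hH
end

section
/- There exists an absolute constant C > 0 such that for every d ≥ 1 and every δ ∈ (0, 1), if W : Matrix (Fin d) (Fin d) ℝ is a random matrix whose entries are independent Gaussian random variables with mean 0 and variance 2/d (i.e., W is distributed according to the product measure ⨂ gaussianReal 0 (2/d) over the d² entries), then with probability at least 1 − δ the spectral norm satisfies ‖W‖₂ ≤ C * (1 + Real.sqrt (Real.log (1/δ) / d)). -/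
open ProbabilityTheory MeasureTheory

section aux
open Real RealInnerProductSpace

lemma pdf_mul (v : NNReal) (hv : v ≠ 0) (s x : ℝ) :
    Real.exp (s*x) * gaussianPDFReal 0 v x
      = Real.exp (v*s^2/2) * gaussianPDFReal (v*s) v x := by
  have hv' : (0:ℝ) < v := lt_of_le_of_ne v.coe_nonneg (by exact_mod_cast hv.symm)
  have h2 : Real.exp (s*x) * Real.exp (-(x-0)^2/(2*(v:ℝ)))
      = Real.exp ((v:ℝ)*s^2/2) * Real.exp (-(x-(v:ℝ)*s)^2/(2*(v:ℝ))) := by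
    rw [← Real.exp_add, ← Real.exp_add]; congr 1; field_simp; ring
  unfold gaussianPDFReal
  linear_combination (√(2*π*(v:ℝ)))⁻¹ * h2

lemma integrable_exp_gaussian (v : NNReal) (hv : v ≠ 0) (s : ℝ) :
    Integrable (fun x => Real.exp (s*x)) (gaussianReal 0 v) := by
  rw [gaussianReal_of_var_ne_zero _ hv]
  have hm : Measurable fun x : ℝ => (gaussianPDFReal 0 v x).toNNReal :=
    (measurable_gaussianPDFReal 0 v).real_toNNReal
  have : (gaussianPDF 0 v) = fun x => ((gaussianPDFReal 0 v x).toNNReal : ENNReal) := by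
    ext x; simp [gaussianPDF, ENNReal.ofReal]
  rw [this, integrable_withDensity_iff_integrable_smul hm]
  have : (fun x => (gaussianPDFReal 0 v x).toNNReal • Real.exp (s*x))
      = fun x => Real.exp ((v:ℝ)*s^2/2) * gaussianPDFReal ((v:ℝ)*s) v x := by
    ext x
    rw [NNReal.smul_def, smul_eq_mul, Real.coe_toNNReal _ (gaussianPDFReal_nonneg 0 v x),
      mul_comm, pdf_mul v hv]
  rw [this]
  exact (integrable_gaussianPDFReal _ v).const_mul _

lemma integral_exp_gaussian (v : NNReal) (hv : v ≠ 0) (s : ℝ) :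
    ∫ x, Real.exp (s*x) ∂(gaussianReal 0 v) = Real.exp ((v:ℝ)*s^2/2) := by
  rw [gaussianReal_of_var_ne_zero _ hv]
  have hm : Measurable fun x : ℝ => (gaussianPDFReal 0 v x).toNNReal :=
    (measurable_gaussianPDFReal 0 v).real_toNNReal
  have h : (gaussianPDF 0 v) = fun x => ((gaussianPDFReal 0 v x).toNNReal : ENNReal) := by
    ext x; simp [gaussianPDF, ENNReal.ofReal]
  rw [h, integral_withDensity_eq_integral_smul hm]
  have : (fun x => (gaussianPDFReal 0 v x).toNNReal • Real.exp (s*x))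
      = fun x => Real.exp ((v:ℝ)*s^2/2) * gaussianPDFReal ((v:ℝ)*s) v x := by
    ext x
    rw [NNReal.smul_def, smul_eq_mul, Real.coe_toNNReal _ (gaussianPDFReal_nonneg 0 v x),
      mul_comm, pdf_mul v hv]
  rw [this, MeasureTheory.integral_const_mul, integral_gaussianPDFReal_eq_one _ hv, mul_one]

lemma gaussian_sum_tail' {ι : Type*} [Fintype ι] (v : NNReal) (hv : v ≠ 0) (c : ι → ℝ)
    (hc : ∑ i, (c i)^2 ≤ 1) (t : ℝ) (ht : 0 ≤ t) :
    (Measure.pi fun _ : ι => gaussianReal 0 v) {g | t ≤ ∑ i, c i * g i}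
      ≤ ENNReal.ofReal (Real.exp (-(t^2 / (2*(v:ℝ))))) := by
  letI : MeasureSpace ℝ := ⟨gaussianReal 0 v⟩
  have hvol : (volume : Measure ℝ) = gaussianReal 0 v := rfl
  haveI : SigmaFinite (volume : Measure ℝ) := by
    rw [hvol]; infer_instance
  set μ : Measure (ι → ℝ) := Measure.pi fun _ : ι => gaussianReal 0 v with hμ
  haveI : IsProbabilityMeasure μ := by
    rw [hμ]; infer_instance
  have hv' : (0:ℝ) < v := lt_of_le_of_ne v.coe_nonneg (by exact_mod_cast hv.symm)
  set lam : ℝ := t / v with hlam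
  have hlam0 : 0 ≤ lam := div_nonneg ht hv'.le
  set X : (ι → ℝ) → ℝ := fun g => ∑ i, c i * g i with hX
  clear_value lam
  have hprod : ∀ g : ι → ℝ, Real.exp (lam * X g) = ∏ i, Real.exp ((lam * c i) * (g i)) := by
    intro g
    rw [← Real.exp_sum, hX, Finset.mul_sum]
    exact congrArg Real.exp (Finset.sum_congr rfl fun i _ => by ring)
  have h_int : Integrable (fun g => Real.exp (lam * X g)) μ := by
    simp only [hprod]
    exact Integrable.fintype_prod (f := fun i x => Real.exp ((lam * c i) * x))
      (fun i => integrable_exp_gaussian v hv _)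
  have hmgf : mgf X μ lam = Real.exp ((v:ℝ) * lam^2 / 2 * ∑ i, (c i)^2) := by
    rw [mgf]
    simp only [hprod]
    rw [hμ,
      MeasureTheory.integral_fintype_prod_eq_prod
      (f := fun i x => Real.exp ((lam * c i) * x))]
    have : ∀ i, ∫ x, Real.exp ((lam * c i) * x) ∂(volume : Measure ℝ)
        = Real.exp ((v:ℝ) * (lam * c i)^2/2) := fun i => by
      rw [hvol]; exact integral_exp_gaussian v hv _
    rw [Finset.prod_congr rfl fun i _ =>
      integral_exp_gaussian v hv (lam * c i), ← Real.exp_sum]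
    congr 1
    rw [Finset.mul_sum]
    exact Finset.sum_congr rfl fun i _ => by ring
  have key := measure_ge_le_exp_mul_mgf (X := X) (μ := μ) t hlam0 h_int
  have hle : Real.exp (-lam * t) * mgf X μ lam ≤ Real.exp (-(t^2 / (2*(v:ℝ)))) := by
    rw [hmgf, ← Real.exp_add]
    apply Real.exp_le_exp.2
    have h1 : (v:ℝ) * lam^2/2 * ∑ i, (c i)^2 ≤ (v:ℝ) * lam^2/2 * 1 := by
      apply mul_le_mul_of_nonneg_left hc
      positivity
    have h2 : (v:ℝ) * lam^2/2 = t^2/(2*(v:ℝ)) := by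
      rw [hlam]; field_simp
    have h3 : lam * t = 2*(t^2/(2*(v:ℝ))) := by rw [hlam]; field_simp
    linarith
  calc μ {g | t ≤ X g} = ENNReal.ofReal (μ {g | t ≤ X g}).toReal := by
        rw [ENNReal.ofReal_toReal (measure_ne_top _ _)]
    _ ≤ ENNReal.ofReal (Real.exp (-(t^2 / (2*(v:ℝ))))) :=
        ENNReal.ofReal_le_ofReal (key.trans hle)

lemma exists_net' (d : ℕ) : ∃ N : Finset (EuclideanSpace ℝ (Fin d)),
    N.Nonempty ∧ N.card ≤ 5^d ∧ (∀ u ∈ N, ‖u‖ ≤ 1) ∧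
    ∀ x : EuclideanSpace ℝ (Fin d), ‖x‖ ≤ 1 → ∃ y ∈ N, ‖x - y‖ ≤ 1/2 := by
  classical
  set P : Finset (EuclideanSpace ℝ (Fin d)) → Prop := fun s =>
    (∀ c ∈ s, ‖c‖ ≤ 2) ∧ ∀ c ∈ s, ∀ e ∈ s, c ≠ e → 1 ≤ ‖c - e‖ with hP
  set A : Set ℕ := {n | ∃ s, P s ∧ s.card = n} with hA
  have hcb : ∀ s : Finset (EuclideanSpace ℝ (Fin d)), P s → s.card ≤ 5^d := by
    intro s hs
    have := Besicovitch.card_le_of_separated s hs.1 hs.2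
    rwa [finrank_euclideanSpace_fin] at this
  have hA0 : 0 ∈ A := ⟨∅, ⟨by simp, by simp⟩, by simp⟩
  have hbdd : BddAbove A := by
    refine ⟨5 ^ d, fun n hn => ?_⟩
    obtain ⟨s, hs, rfl⟩ := hn
    exact hcb s hs
  have hmem : sSup A ∈ A := Nat.sSup_mem ⟨0, hA0⟩ hbdd
  obtain ⟨s, hs, hcard⟩ := hmem
  have hnet2 : ∀ x : EuclideanSpace ℝ (Fin d), ‖x‖ ≤ 2 → ∃ y ∈ s, ‖x - y‖ ≤ 1 := by
    intro x hx
    by_contra hcon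
    push_neg at hcon
    have hxs : x ∉ s := fun hxs => by
      have := hcon x hxs
      simp only [sub_self, norm_zero] at this
      norm_num at this
    have hP' : P (insert x s) := by
      constructor
      · intro c hc
        rcases Finset.mem_insert.1 hc with rfl | hc
        · exact hx
        · exact hs.1 c hc
      · intro c hc e he hne
        by_cases hcs : c ∈ s <;> by_cases hes : e ∈ s
        · exact hs.2 c hcs e hes hne
        · have hex : e = x := (Finset.mem_insert.1 he).resolve_right hes
          rw [hex, norm_sub_rev]
          exact le_of_lt (hcon c hcs)
        · have hcx : c = x := (Finset.mem_insert.1 hc).resolve_right hcs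
          rw [hcx]
          exact le_of_lt (hcon e hes)
        · have hcx : c = x := (Finset.mem_insert.1 hc).resolve_right hcs
          have hex : e = x := (Finset.mem_insert.1 he).resolve_right hes
          exact absurd (hcx.trans hex.symm) hne
    have hmem2 : s.card + 1 ∈ A :=
      ⟨insert x s, hP', by rw [Finset.card_insert_of_notMem hxs]⟩
    have hle := le_csSup hbdd hmem2
    omega
  refine ⟨s.image (fun y => (2⁻¹ : ℝ) • y), ?_, ?_, ?_, ?_⟩
  · obtain ⟨y, hy, _⟩ := hnet2 0 (by simp)
    exact ⟨_, Finset.mem_image_of_mem _ hy⟩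
  · exact (Finset.card_image_le).trans (hcb s hs)
  · intro u hu
    obtain ⟨y, hy, rfl⟩ := Finset.mem_image.1 hu
    rw [norm_smul]
    have := hs.1 y hy
    simp only [norm_inv, Real.norm_ofNat]
    calc (2:ℝ)⁻¹ * ‖y‖ ≤ 2⁻¹ * 2 :=
          mul_le_mul le_rfl this (norm_nonneg _) (by norm_num)
      _ = 1 := by norm_num
  · intro x hx
    have h2x : ‖(2:ℝ) • x‖ ≤ 2 := by
      rw [norm_smul]; simp only [Real.norm_ofNat]; nlinarith [norm_nonneg x]
    obtain ⟨y, hy, hxy⟩ := hnet2 ((2:ℝ) • x) h2x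
    refine ⟨(2⁻¹:ℝ) • y, Finset.mem_image_of_mem _ hy, ?_⟩
    have heq : x - (2⁻¹:ℝ) • y = (2⁻¹:ℝ) • ((2:ℝ) • x - y) := by
      rw [smul_sub, smul_smul]; norm_num
    rw [heq, norm_smul]
    simp only [norm_inv, Real.norm_ofNat]
    calc (2:ℝ)⁻¹ * ‖(2:ℝ) • x - y‖ ≤ 2⁻¹ * 1 :=
          mul_le_mul le_rfl hxy (norm_nonneg _) (by norm_num)
      _ = 1/2 := by norm_num

lemma norm_le_net' {d : ℕ} (N : Finset (EuclideanSpace ℝ (Fin d)))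
    (hnet : ∀ x : EuclideanSpace ℝ (Fin d), ‖x‖ ≤ 1 → ∃ y ∈ N, ‖x - y‖ ≤ 1/2)
    (w : EuclideanSpace ℝ (Fin d)) (m : ℝ) (hm : 0 ≤ m)
    (hw : ∀ u ∈ N, |⟪w, u⟫| ≤ m) : ‖w‖ ≤ 2 * m := by
  rcases eq_or_ne w 0 with rfl | hw0
  · simpa using by linarith
  · have hnw : (0:ℝ) < ‖w‖ := norm_pos_iff.2 hw0
    have hunit : ‖‖w‖⁻¹ • w‖ = 1 := by
      rw [norm_smul, norm_inv, norm_norm, inv_mul_cancel₀ hnw.ne']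
    obtain ⟨y, hy, hxy⟩ := hnet (‖w‖⁻¹ • w) hunit.le
    have h1 : ⟪w, ‖w‖⁻¹ • w⟫ = ‖w‖ := by
      rw [real_inner_smul_right, real_inner_self_eq_norm_sq]
      field_simp
    have h2 : ⟪w, ‖w‖⁻¹ • w - y⟫ ≤ ‖w‖ * (1/2) :=
      (real_inner_le_norm _ _).trans (mul_le_mul le_rfl hxy (norm_nonneg _) (norm_nonneg _))
    have h3 : ⟪w, y⟫ = ⟪w, ‖w‖⁻¹ • w⟫ - ⟪w, ‖w‖⁻¹ • w - y⟫ := by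
      rw [inner_sub_right]; ring
    have h4 : ‖w‖/2 ≤ ⟪w, y⟫ := by
      rw [h3, h1]; linarith
    have h5 : ⟪w, y⟫ ≤ m := le_trans (le_abs_self _) (hw y hy)
    linarith

lemma opnorm_le_net' {d : ℕ} (N : Finset (EuclideanSpace ℝ (Fin d))) (hN : N.Nonempty)
    (hnet : ∀ x : EuclideanSpace ℝ (Fin d), ‖x‖ ≤ 1 → ∃ y ∈ N, ‖x - y‖ ≤ 1/2)
    (A : EuclideanSpace ℝ (Fin d) →L[ℝ] EuclideanSpace ℝ (Fin d)) (M : ℝ)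
    (hM : ∀ u ∈ N, ∀ v ∈ N, |⟪A v, u⟫| ≤ M) : ‖A‖ ≤ 4 * M := by
  obtain ⟨u₀, hu₀⟩ := hN
  have hM0 : 0 ≤ M := le_trans (abs_nonneg _) (hM u₀ hu₀ u₀ hu₀)
  have hb : ∀ x : EuclideanSpace ℝ (Fin d), ‖x‖ ≤ 1 → ‖A x‖ ≤ 2*M + ‖A‖ * (1/2) := by
    intro x hx
    obtain ⟨y, hy, hxy⟩ := hnet x hx
    have h1 : ‖A y‖ ≤ 2 * M := norm_le_net' N hnet (A y) M hM0 (fun u hu => hM u hu y hy)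
    have hsplit : A x = A y + A (x - y) := by rw [map_sub]; abel
    calc ‖A x‖ = ‖A y + A (x - y)‖ := by rw [hsplit]
      _ ≤ ‖A y‖ + ‖A (x - y)‖ := norm_add_le _ _
      _ ≤ 2*M + ‖A‖ * (1/2) := by
          refine add_le_add h1 ?_
          calc ‖A (x-y)‖ ≤ ‖A‖ * ‖x - y‖ := A.le_opNorm _
            _ ≤ ‖A‖ * (1/2) := mul_le_mul le_rfl hxy (norm_nonneg _) (norm_nonneg _)
  have hc0 : (0:ℝ) ≤ 2*M + ‖A‖ * (1/2) := by
    have := ContinuousLinearMap.opNorm_nonneg A; linarith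
  have hA : ‖A‖ ≤ 2*M + ‖A‖ * (1/2) := by
    refine ContinuousLinearMap.opNorm_le_bound A hc0 fun x => ?_
    rcases eq_or_ne x 0 with rfl | hx0
    · simp only [map_zero, norm_zero, mul_zero, le_refl]
    · have hnx : (0:ℝ) < ‖x‖ := norm_pos_iff.2 hx0
      have hunit : ‖‖x‖⁻¹ • x‖ = 1 := by
        rw [norm_smul, norm_inv, norm_norm, inv_mul_cancel₀ hnx.ne']
      have hb2 := hb (‖x‖⁻¹ • x) hunit.le
      rw [_root_.map_smul, norm_smul, norm_inv, norm_norm] at hb2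
      calc ‖A x‖ = ‖x‖ * (‖x‖⁻¹ * ‖A x‖) := by field_simp
        _ ≤ ‖x‖ * (2*M + ‖A‖*(1/2)) := mul_le_mul le_rfl hb2 (by positivity) (norm_nonneg _)
        _ = (2*M + ‖A‖*(1/2)) * ‖x‖ := by ring
  linarith

lemma inner_toEuclideanLin' {d : ℕ} (g : Fin d × Fin d → ℝ) (u v : EuclideanSpace ℝ (Fin d)) :
    ⟪(Matrix.toEuclideanLin (Matrix.of fun i j => g (i, j))) v, u⟫
      = ∑ p : Fin d × Fin d, (u p.1 * v p.2) * g p := by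
  rw [PiLp.inner_apply]
  simp only [RCLike.inner_apply, conj_trivial]
  rw [Fintype.sum_prod_type]
  simp only [Matrix.toEuclideanLin_apply, Matrix.mulVec,
    dotProduct, Matrix.of_apply]
  refine Finset.sum_congr rfl fun i _ => ?_
  rw [Finset.mul_sum]
  refine Finset.sum_congr rfl fun j _ => ?_
  ring

end aux

open Real RealInnerProductSpace

lemma meas_spec' {d : ℕ} (B : ℝ) :
    MeasurableSet {g : Fin d × Fin d → ℝ |
      matrixSpectralNorm (Matrix.of fun i j => g (i, j)) ≤ B} := by
  have : Continuous fun g : Fin d × Fin d → ℝ =>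
      matrixSpectralNorm (Matrix.of fun i j => g (i, j)) := by
    have hL : IsLinearMap ℝ (fun g : Fin d × Fin d → ℝ =>
        LinearMap.toContinuousLinearMap (Matrix.toEuclideanLin
          (Matrix.of fun i j => g (i, j)))) := by
      constructor
      · intro a b
        ext x i
        simp [Matrix.toEuclideanLin_apply, Matrix.mulVec, dotProduct, add_mul,
          Finset.sum_add_distrib]
      · intro c a
        ext x i
        simp [Matrix.toEuclideanLin_apply, Matrix.mulVec, dotProduct, Finset.mul_sum,
          mul_assoc]
    exact continuous_norm.comp (hL.mk' _).continuous_of_finiteDimensional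
  exact measurableSet_le this.measurable measurable_const

theorem gaussian_matrix_spectralNorm_bound :
    ∃ C : ℝ, 0 < C ∧ ∀ d : ℕ, 1 ≤ d → ∀ δ : ℝ, 0 < δ → δ < 1 →
      ENNReal.ofReal (1 - δ) ≤
        (Measure.pi fun _ : Fin d × Fin d => gaussianReal 0 (2 / d : NNReal))
          {g : Fin d × Fin d → ℝ |
            matrixSpectralNorm (Matrix.of fun i j => g (i, j)) ≤
              C * (1 + Real.sqrt (Real.log (1 / δ) / d))} := by
  classical
  refine ⟨16, by norm_num, fun d hd δ hδ0 hδ1 => ?_⟩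
  have hd0 : (0:ℝ) < d := by exact_mod_cast hd
  set v : NNReal := (2 / d : NNReal) with hv
  have hvne : v ≠ 0 := by
    rw [hv]
    have : (d:NNReal) ≠ 0 := Nat.cast_ne_zero.2 (by omega)
    simp [div_eq_mul_inv, this]
  have hvr : (v:ℝ) = 2 / (d:ℝ) := by
    rw [hv, NNReal.coe_div]
    norm_num
  set μ := Measure.pi fun _ : Fin d × Fin d => gaussianReal 0 v with hμ
  haveI : IsProbabilityMeasure μ := by rw [hμ]; infer_instance
  set L : ℝ := Real.log (1/δ) with hLdef
  have hL0 : 0 ≤ L := Real.log_nonneg (by rw [le_div_iff₀ hδ0]; linarith)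
  set R : ℝ := Real.sqrt (L / d) with hR
  have hR0 : 0 ≤ R := Real.sqrt_nonneg _
  set s : ℝ := 4 * (1 + R) with hs
  have hs0 : 0 ≤ s := by positivity
  obtain ⟨N, hNne, hNcard, hNball, hNnet⟩ := exists_net' d
  -- the coefficient sum bound
  have hsq : ∀ w : EuclideanSpace ℝ (Fin d), ‖w‖ ≤ 1 → ∑ i, (w i)^2 ≤ 1 := by
    intro w hw
    have h1 : ∑ i, (w i)^2 = ‖w‖^2 := by
      rw [EuclideanSpace.norm_eq, Real.sq_sqrt (by positivity)]
      exact Finset.sum_congr rfl fun i _ => by rw [Real.norm_eq_abs, sq_abs]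
    rw [h1]
    nlinarith [norm_nonneg w]
  have hcsum : ∀ u ∈ N, ∀ w ∈ N, ∑ p : Fin d × Fin d, ((u p.1 * w p.2))^2 ≤ 1 := by
    intro u hu w hw
    have : ∑ p : Fin d × Fin d, (u p.1 * w p.2)^2
        = (∑ i, (u i)^2) * (∑ j, (w j)^2) := by
      rw [Fintype.sum_prod_type, Finset.sum_mul_sum]
      exact Finset.sum_congr rfl fun i _ => Finset.sum_congr rfl fun j _ => by ring
    rw [this]
    exact mul_le_one₀ (hsq u (hNball u hu)) (Finset.sum_nonneg fun j _ => sq_nonneg _)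
      (hsq w (hNball w hw))
  -- tail events
  set badp : (EuclideanSpace ℝ (Fin d) × EuclideanSpace ℝ (Fin d)) → Set (Fin d × Fin d → ℝ) :=
    fun q => {g | s ≤ ∑ p : Fin d × Fin d, (q.1 p.1 * q.2 p.2) * g p} with hbadp
  set badm : (EuclideanSpace ℝ (Fin d) × EuclideanSpace ℝ (Fin d)) → Set (Fin d × Fin d → ℝ) :=
    fun q => {g | s ≤ ∑ p : Fin d × Fin d, (-(q.1 p.1 * q.2 p.2)) * g p} with hbadm
  -- coverage
  have hcover : {g : Fin d × Fin d → ℝ |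
        matrixSpectralNorm (Matrix.of fun i j => g (i, j)) ≤ 16 * (1 + R)}ᶜ
      ⊆ ⋃ q ∈ N ×ˢ N, (badp q ∪ badm q) := by
    intro g hg
    by_contra hgmem
    simp only [Set.mem_iUnion, not_exists] at hgmem
    apply hg
    show matrixSpectralNorm (Matrix.of fun i j => g (i, j)) ≤ 16 * (1 + R)
    have hbound : ‖LinearMap.toContinuousLinearMap (Matrix.toEuclideanLin
        (Matrix.of fun i j => g (i, j)))‖ ≤ 4 * s := by
      apply opnorm_le_net' N hNne hNnet _ s
      intro u hu w hw
      have hq : (u, w) ∈ N ×ˢ N := Finset.mem_product.2 ⟨hu, hw⟩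
      have hnotin := hgmem (u, w) hq
      rw [Set.mem_union] at hnotin
      push_neg at hnotin
      obtain ⟨h1, h2⟩ := hnotin
      simp only [hbadp, hbadm, Set.mem_setOf_eq, not_le] at h1 h2
      have hip : ⟪(LinearMap.toContinuousLinearMap (Matrix.toEuclideanLin
          (Matrix.of fun i j => g (i, j)))) w, u⟫
          = ∑ p : Fin d × Fin d, (u p.1 * w p.2) * g p := by
        rw [LinearMap.coe_toContinuousLinearMap']
        exact inner_toEuclideanLin' g u w
      rw [abs_le]
      constructor
      · have : ∑ p : Fin d × Fin d, (-(u p.1 * w p.2)) * g p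
            = -∑ p : Fin d × Fin d, (u p.1 * w p.2) * g p := by
          rw [← Finset.sum_neg_distrib]
          exact Finset.sum_congr rfl fun p _ => by ring
        rw [hip]
        rw [this] at h2
        linarith
      · rw [hip]; linarith
    calc matrixSpectralNorm (Matrix.of fun i j => g (i, j)) ≤ 4 * s := hbound
      _ = 16 * (1 + R) := by rw [hs]; ring
  -- measure bound
  have htail : ∀ q ∈ N ×ˢ N, μ (badp q ∪ badm q)
      ≤ ENNReal.ofReal (Real.exp (-(s^2 / (2*(v:ℝ))))) +
        ENNReal.ofReal (Real.exp (-(s^2 / (2*(v:ℝ))))) := by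
    intro q hq
    obtain ⟨hq1, hq2⟩ := Finset.mem_product.1 hq
    refine (measure_union_le _ _).trans (add_le_add ?_ ?_)
    · exact gaussian_sum_tail' v hvne _ (hcsum _ hq1 _ hq2) s hs0
    · refine gaussian_sum_tail' v hvne _ ?_ s hs0
      have : ∑ p : Fin d × Fin d, (-(q.1 p.1 * q.2 p.2))^2
          = ∑ p : Fin d × Fin d, (q.1 p.1 * q.2 p.2)^2 :=
        Finset.sum_congr rfl fun p _ => by ring
      rw [this]
      exact hcsum _ hq1 _ hq2
  have hmeasbad : μ {g : Fin d × Fin d → ℝ |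
        matrixSpectralNorm (Matrix.of fun i j => g (i, j)) ≤ 16 * (1 + R)}ᶜ
      ≤ ENNReal.ofReal δ := by
    refine le_trans (measure_mono hcover) ?_
    refine le_trans (measure_biUnion_finset_le _ _) ?_
    set e : ENNReal := ENNReal.ofReal (Real.exp (-(s^2 / (2*(v:ℝ))))) with he
    have hsum : ∑ q ∈ N ×ˢ N, μ (badp q ∪ badm q) ≤ (N ×ˢ N).card • (e + e) := by
      rw [← Finset.sum_const]
      exact Finset.sum_le_sum htail
    refine hsum.trans ?_
    -- numeric bound
    have hcard : ((N ×ˢ N).card : ENNReal) ≤ ((25^d : ℕ) : ENNReal) := by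
      have h1 : (N ×ˢ N).card ≤ 25^d := by
        rw [Finset.card_product]
        calc N.card * N.card ≤ 5^d * 5^d := Nat.mul_le_mul hNcard hNcard
          _ = 25^d := by rw [← Nat.mul_pow]
      exact_mod_cast h1
    rw [nsmul_eq_mul]
    have hee : e + e = ENNReal.ofReal (2 * Real.exp (-(s^2 / (2*(v:ℝ))))) := by
      rw [he, ← ENNReal.ofReal_add (by positivity) (by positivity)]
      ring_nf
    rw [hee]
    refine le_trans (mul_le_mul_left hcard _) ?_
    rw [show ((25^d : ℕ) : ENNReal) = ENNReal.ofReal ((25:ℝ)^d) by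
      rw [ENNReal.ofReal_pow (by norm_num)]; norm_num]
    rw [← ENNReal.ofReal_mul (by positivity)]
    apply ENNReal.ofReal_le_ofReal
    -- the real inequality
    have hx : s^2 / (2*(v:ℝ)) ≥ 4*d + 4*L := by
      rw [hvr]
      have h2v : 2 * (2/(d:ℝ)) = 4/d := by ring
      rw [h2v, div_div_eq_mul_div, ge_iff_le]
      have hRsq : R^2 = L / d := Real.sq_sqrt (by positivity)
      have hs2 : s^2 = 16 * (1 + R)^2 := by rw [hs]; ring
      have h1R : 1 + L/(d:ℝ) ≤ (1+R)^2 := by nlinarith [hRsq, hR0]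
      calc 4*(d:ℝ) + 4*L = 4*d*(1 + L/d) := by field_simp
        _ ≤ 4*d*(1+R)^2 := mul_le_mul_of_nonneg_left h1R (by positivity)
        _ = s^2 * d / 4 := by rw [hs2]; ring
    have hexp : Real.exp (-(s^2 / (2*(v:ℝ)))) ≤ Real.exp (-(4*d + 4*L)) :=
      Real.exp_le_exp.2 (by linarith)
    have hexpsplit : Real.exp (-(4*(d:ℝ) + 4*L)) = Real.exp (-(4*(d:ℝ))) * δ^4 := by
      rw [show -(4*(d:ℝ) + 4*L) = (-(4*(d:ℝ))) + 4*(-L) by ring, Real.exp_add]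
      congr 1
      rw [show (4:ℝ)*(-L) = (4:ℕ)*(-L) by norm_num, Real.exp_nat_mul]
      congr 1
      rw [hLdef, ← Real.log_inv, Real.exp_log (by positivity)]
      field_simp
    have h25 : (25:ℝ)^d * Real.exp (-(4*(d:ℝ))) ≤ 1/2 := by
      have hbase : (25:ℝ) * Real.exp (-4) ≤ 1/2 := by
        have he1 : Real.exp 1 > 2.7182818283 := Real.exp_one_gt_d9
        have he4 : Real.exp 4 = (Real.exp 1)^(4:ℕ) := by
          rw [← Real.exp_nat_mul]; norm_num
        have h27 : (2.7182818283:ℝ)^4 ≤ Real.exp 1 ^ (4:ℕ) :=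
          pow_le_pow_left₀ (by norm_num) he1.le 4
        have : Real.exp 4 ≥ 50 := by
          rw [he4]
          calc (50:ℝ) ≤ (2.7182818283:ℝ)^4 := by norm_num
            _ ≤ _ := h27
        rw [Real.exp_neg]
        rw [mul_inv_le_iff₀ (by positivity)]
        linarith
      have hstep : ∀ n : ℕ, 1 ≤ n → (25:ℝ)^n * Real.exp (-(4*(n:ℝ))) ≤ 1/2 := by
        intro n hn
        induction n with
        | zero => omega
        | succ k ih =>
          rcases Nat.eq_or_lt_of_le hn with h1 | h2
          · rw [← h1]
            push_cast
            ring_nf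
            ring_nf at hbase
            linarith
          · have hk : 1 ≤ k := by omega
            have ihk := ih hk
            have : (25:ℝ)^(k+1) * Real.exp (-(4*((k+1:ℕ):ℝ)))
                = ((25:ℝ)^k * Real.exp (-(4*(k:ℝ)))) * (25 * Real.exp (-4)) := by
              push_cast
              rw [pow_succ, show -(4*((k:ℝ)+1)) = -(4*(k:ℝ)) + -4 by ring, Real.exp_add]
              ring
            rw [this]
            calc ((25:ℝ)^k * Real.exp (-(4*(k:ℝ)))) * (25 * Real.exp (-4))
                ≤ (1/2) * (1/2) := by
                  apply mul_le_mul ihk (by linarith) (by positivity) (by norm_num)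
              _ ≤ 1/2 := by norm_num
      exact hstep d hd
    calc (25:ℝ)^d * (2 * Real.exp (-(s^2 / (2*(v:ℝ)))))
        ≤ (25:ℝ)^d * (2 * (Real.exp (-(4*(d:ℝ))) * δ^4)) := by
          rw [← hexpsplit]
          gcongr

      _ = ((25:ℝ)^d * Real.exp (-(4*(d:ℝ)))) * (2 * δ^4) := by ring
      _ ≤ (1/2) * (2*δ^4) := by
          apply mul_le_mul h25 le_rfl (by positivity) (by norm_num)
      _ = δ^4 := by ring
      _ ≤ δ := by
          calc δ^4 ≤ δ^1 := pow_le_pow_of_le_one hδ0.le hδ1.le (by norm_num)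
            _ = δ := pow_one δ
  -- conclude
  have hmeas : MeasurableSet {g : Fin d × Fin d → ℝ |
      matrixSpectralNorm (Matrix.of fun i j => g (i, j)) ≤ 16 * (1 + R)} := meas_spec' _
  have htotal := measure_add_measure_compl (μ := μ) hmeas
  rw [measure_univ] at htotal
  have h1le : (1:ENNReal) ≤ μ {g : Fin d × Fin d → ℝ |
      matrixSpectralNorm (Matrix.of fun i j => g (i, j)) ≤ 16 * (1 + R)} + ENNReal.ofReal δ := by
    rw [← htotal]
    exact add_le_add le_rfl hmeasbad
  have : ENNReal.ofReal (1 - δ) ≤ μ {g : Fin d × Fin d → ℝ |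
      matrixSpectralNorm (Matrix.of fun i j => g (i, j)) ≤ 16 * (1 + R)} := by
    rw [ENNReal.ofReal_sub _ hδ0.le, ENNReal.ofReal_one]
    exact tsub_le_iff_right.2 h1le
  exact this
end
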